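/- For every natural number n, ∑_{k=1}^{n} S(n,k) ≤ S(n,0). That is, the paper's lower bound on the number of unknot diagrams on the (2n+1)×(2n+1) lattice is at least as large as the sum of the lower bounds over all nontrivial strata combined. -/

import Mathlib

/-- `ε(d) = 1` if `d ≥ 2` and `ε(d) = 0` if `d ≤ 1`. -/
def eps (d : ℕ) : ℕ := if 2 ≤ d then 1 else 0

/-- The paper's lower bound `L(n,k)` on the number of copies of an untiable
`(2k+1)×(2k+1)` lattice inside the `(2n+1)×(2n+1)` lattice. -/
def L (n k : ℕ) : ℕ :=
  (n - k + 1) ^ 2 *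
    (2 ^ (2 * (n - k) * (n + k + 2)) + eps (n - k) * 2 ^ ((n - k) * (n + 3 * k + 4)))

/-- The multiplicities `c_0 = 1`, `c_1 = 6`, `c_k = 8k` for `k ≥ 2`. -/
def c (k : ℕ) : ℕ := if k = 0 then 1 else if k = 1 then 6 else 8 * k

/-- The paper's lower bound `S(n,k) = c_k · L(n,k)` on the number of lattice-knot
diagrams on the `(2n+1)×(2n+1)` lattice whose knot type first appears on the
`(2k+1)×(2k+1)` lattice. -/
def S (n k : ℕ) : ℕ := c k * L n k

lemma c_bound (k : ℕ) (hk : 1 ≤ k) : c k * 2 * 2 ^ (k + 1) ≤ 2 ^ (2 * k * (k + 2)) := by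
  rcases eq_or_lt_of_le hk with h | h
  · subst h; norm_num [c]
  · have h2 : 2 ≤ k := h
    have hk0 : k ≠ 0 := by omega
    have hk1 : k ≠ 1 := by omega
    simp only [c, hk0, hk1, if_false]
    have e1 : 8 * k * 2 * 2 ^ (k + 1) = k * 2 ^ (k + 5) := by
      rw [pow_add, pow_add]; ring
    rw [e1]
    calc k * 2 ^ (k + 5) ≤ 2 ^ k * 2 ^ (k + 5) :=
          Nat.mul_le_mul_right _ (Nat.lt_two_pow_self (n := k)).le
      _ = 2 ^ (2 * k + 5) := by rw [← pow_add]; ring_nf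
      _ ≤ 2 ^ (2 * k * (k + 2)) := Nat.pow_le_pow_right (by norm_num) (by nlinarith)

lemma key (n k : ℕ) (hk : 1 ≤ k) (hkn : k ≤ n) :
    2 ^ (k + 1) * S n k ≤ (n + 1) ^ 2 * 2 ^ (2 * n * (n + 2)) := by
  obtain ⟨d, rfl⟩ := Nat.exists_eq_add_of_le hkn
  have hsub : k + d - k = d := by omega
  simp only [S, L, hsub]
  have heps : eps d ≤ 1 := by unfold eps; split <;> omega
  have hexp1 : d * (k + d + 3 * k + 4) ≤ 2 * d * (k + d + k + 2) := by nlinarith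
  have hbig : 2 ^ (2 * (k + d) * (k + d + 2)) =
      2 ^ (2 * k * (k + 2)) * 2 ^ (2 * d * (k + d + k + 2)) := by
    rw [← pow_add]; ring_nf
  have hinner : 2 ^ (2 * d * (k + d + k + 2)) + eps d * 2 ^ (d * (k + d + 3 * k + 4)) ≤
      2 * 2 ^ (2 * d * (k + d + k + 2)) := by
    have := Nat.pow_le_pow_right (show 1 ≤ 2 by norm_num) hexp1
    calc 2 ^ (2 * d * (k + d + k + 2)) + eps d * 2 ^ (d * (k + d + 3 * k + 4))
        ≤ 2 ^ (2 * d * (k + d + k + 2)) + 1 * 2 ^ (2 * d * (k + d + k + 2)) :=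
          Nat.add_le_add_left (Nat.mul_le_mul heps this) _
      _ = 2 * 2 ^ (2 * d * (k + d + k + 2)) := by ring
  calc 2 ^ (k + 1) * (c k * ((d + 1) ^ 2 *
        (2 ^ (2 * d * (k + d + k + 2)) + eps d * 2 ^ (d * (k + d + 3 * k + 4)))))
      ≤ 2 ^ (k + 1) * (c k * ((k + d + 1) ^ 2 * (2 * 2 ^ (2 * d * (k + d + k + 2))))) :=
        Nat.mul_le_mul_left _ (Nat.mul_le_mul_left _
          (Nat.mul_le_mul (Nat.pow_le_pow_left (by omega) 2) hinner))
    _ = (c k * 2 * 2 ^ (k + 1)) * ((k + d + 1) ^ 2 * 2 ^ (2 * d * (k + d + k + 2))) := by ring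
    _ ≤ 2 ^ (2 * k * (k + 2)) * ((k + d + 1) ^ 2 * 2 ^ (2 * d * (k + d + k + 2))) :=
        Nat.mul_le_mul_right _ (c_bound k hk)
    _ = (k + d + 1) ^ 2 * 2 ^ (2 * (k + d) * (k + d + 2)) := by rw [hbig]; ring

lemma sum_pow_lt (M : ℕ) : ∑ j ∈ Finset.range M, 2 ^ j < 2 ^ M := by
  induction M with
  | zero => simp
  | succ m ih =>
    rw [Finset.sum_range_succ, pow_succ]
    omega

/-- The lower bound on the number of unknot diagrams is at least as large as
the sum of the lower bounds over all nontrivial strata combined. -/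
theorem unknot_bound_dominates_sum (n : ℕ) :
    ∑ k ∈ Finset.Icc 1 n, S n k ≤ S n 0 := by
  rcases Nat.eq_zero_or_pos n with h | hn
  · subst h; simp
  set M := 2 * n * (n + 2) with hM
  have hMn : n + 1 ≤ M := by rw [hM]; nlinarith
  have hA : (n + 1) ^ 2 * 2 ^ M ≤ S n 0 := by
    have hS0 : S n 0 = (n + 1) ^ 2 * (2 ^ M + eps n * 2 ^ (n * (n + 4))) := by
      simp only [S, L, c, if_pos rfl, Nat.sub_zero, one_mul, hM]
      norm_num
    rw [hS0]
    exact Nat.mul_le_mul_left _ (Nat.le_add_right _ _)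
  have step : ∀ k ∈ Finset.Icc 1 n, S n k ≤ (n + 1) ^ 2 * 2 ^ (M - 1 - k) := by
    intro k hk
    rw [Finset.mem_Icc] at hk
    have hkey := key n k hk.1 hk.2
    rw [← hM] at hkey
    have h1 : k + 1 + (M - 1 - k) = M := by omega
    have hsplit : (n + 1) ^ 2 * 2 ^ M = 2 ^ (k + 1) * ((n + 1) ^ 2 * 2 ^ (M - 1 - k)) := by
      calc (n + 1) ^ 2 * 2 ^ M = (n + 1) ^ 2 * 2 ^ (k + 1 + (M - 1 - k)) := by rw [h1]
        _ = 2 ^ (k + 1) * ((n + 1) ^ 2 * 2 ^ (M - 1 - k)) := by rw [pow_add]; ring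
    rw [hsplit] at hkey
    exact Nat.le_of_mul_le_mul_left hkey (Nat.pow_pos (by norm_num))
  calc ∑ k ∈ Finset.Icc 1 n, S n k
      ≤ ∑ k ∈ Finset.Icc 1 n, (n + 1) ^ 2 * 2 ^ (M - 1 - k) := Finset.sum_le_sum step
    _ = (n + 1) ^ 2 * ∑ k ∈ Finset.Icc 1 n, 2 ^ (M - 1 - k) := by rw [Finset.mul_sum]
    _ ≤ (n + 1) ^ 2 * 2 ^ M := by
        apply Nat.mul_le_mul_left
        have hinj : ∀ a ∈ Finset.Icc 1 n, ∀ b ∈ Finset.Icc 1 n,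
            M - 1 - a = M - 1 - b → a = b := by
          intro a ha b hb hab
          rw [Finset.mem_Icc] at ha hb
          omega
        calc ∑ k ∈ Finset.Icc 1 n, 2 ^ (M - 1 - k)
            = ∑ j ∈ (Finset.Icc 1 n).image (fun k => M - 1 - k), 2 ^ j :=
              (Finset.sum_image hinj).symm
          _ ≤ ∑ j ∈ Finset.range M, 2 ^ j := by
              apply Finset.sum_le_sum_of_subset
              intro j hj
              simp only [Finset.mem_image, Finset.mem_Icc] at hj
              obtain ⟨a, ha, rfl⟩ := hj
              simp only [Finset.mem_range]
              omega
          _ ≤ 2 ^ M := (sum_pow_lt M).le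
    _ ≤ S n 0 := hA
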